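/- For every θ ∈ ℝ one has Re((e^{e^{iθ}} − 1) e^{−iθ}) = e^{cos θ} cos(θ − sin θ) − cos θ ≥ 1 − 1/e, and equality holds at θ = π; in other words, the minimum over θ ∈ [0, 2π) of this expression equals 1 − 1/e. -/

import Mathlib

open Complex Metric Set Real

lemma abs_sin_nat_mul_le' (n : ℕ) (x : ℝ) : |Real.sin (n * x)| ≤ n * |Real.sin x| := by
  induction n with
  | zero => simp
  | succ n ih =>
    have : ((n : ℝ) + 1) * x = n * x + x := by ring
    push_cast
    rw [this, Real.sin_add]
    calc |Real.sin (n*x) * Real.cos x + Real.cos (n*x) * Real.sin x|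
        ≤ |Real.sin (n*x) * Real.cos x| + |Real.cos (n*x) * Real.sin x| := abs_add_le _ _
      _ ≤ |Real.sin (n*x)| * 1 + 1 * |Real.sin x| := by
          rw [abs_mul, abs_mul]
          gcongr <;> simp [Real.abs_cos_le_one]
      _ ≤ n * |Real.sin x| + 1 * |Real.sin x| := by
          rw [mul_one]; gcongr
      _ = ((n : ℝ) + 1) * |Real.sin x| := by ring

lemma one_sub_cos_nat_mul_le (n : ℕ) (x : ℝ) :
    1 - Real.cos (n * x) ≤ (n : ℝ)^2 * (1 - Real.cos x) := by
  have h2 : ∀ y : ℝ, 1 - Real.cos (2 * y) = 2 * Real.sin y ^ 2 := by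
    intro y
    have := Real.sin_sq_add_cos_sq y
    rw [Real.cos_two_mul]; nlinarith
  have hx : (n : ℝ) * x = 2 * (n * (x/2)) := by ring
  have hx2 : x = 2 * (x/2) := by ring
  rw [hx, h2]
  nth_rewrite 2 [hx2]
  rw [h2]
  have h := abs_sin_nat_mul_le' n (x/2)
  have h0 : (0:ℝ) ≤ |Real.sin (x/2)| := abs_nonneg _
  have := _root_.sq_abs (Real.sin (n * (x/2)))
  nlinarith [_root_.sq_abs (Real.sin (x/2)), abs_nonneg (Real.sin (n*(x/2)))]

lemma summable_aux (θ : ℝ) :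
    Summable fun n : ℕ => Complex.exp ((θ:ℂ) * Complex.I) ^ n / ((n+1).factorial : ℂ) := by
  apply Summable.of_norm
  have hb : Summable fun n : ℕ => (1:ℝ)^n / (n.factorial : ℝ) := Real.summable_pow_div_factorial 1
  simp only [one_pow] at hb
  apply hb.of_nonneg_of_le (fun n => norm_nonneg _)
  intro n
  rw [norm_div, norm_pow, Complex.norm_exp_ofReal_mul_I, one_pow]
  rw [Complex.norm_natCast]
  apply div_le_div_of_nonneg_left (by norm_num) (by positivity)
  exact_mod_cast Nat.factorial_le (Nat.le_succ n)

lemma prod_eq_tsum (θ : ℝ) :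
    (Complex.exp (Complex.exp ((θ:ℂ) * Complex.I)) - 1) * Complex.exp (-((θ:ℂ) * Complex.I))
      = ∑' n : ℕ, Complex.exp ((θ:ℂ) * Complex.I) ^ n / ((n+1).factorial : ℂ) := by
  set z := Complex.exp ((θ:ℂ) * Complex.I) with hz
  have hsum : Summable fun n : ℕ => z ^ n / (n.factorial : ℂ) :=
    NormedSpace.expSeries_div_summable z
  have hexp : Complex.exp z = ∑' n : ℕ, z ^ n / (n.factorial : ℂ) := by
    rw [Complex.exp_eq_exp_ℂ, NormedSpace.exp_eq_tsum_div]
  have h0 : Complex.exp z - 1 = ∑' n : ℕ, z ^ (n+1) / ((n+1).factorial : ℂ) := by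
    rw [hexp, Summable.tsum_eq_zero_add hsum]
    simp
  rw [h0, ← tsum_mul_right]
  congr 1; funext n
  have hmul : z * Complex.exp (-((θ:ℂ) * Complex.I)) = 1 := by
    rw [hz, ← Complex.exp_add]; simp
  rw [pow_succ, div_mul_eq_mul_div, mul_assoc, hmul, mul_one]

lemma re_eq_tsum (θ : ℝ) :
    ((Complex.exp (Complex.exp ((θ:ℂ) * Complex.I)) - 1) *
      Complex.exp (-((θ:ℂ) * Complex.I))).re
      = ∑' n : ℕ, Real.cos (n * θ) / ((n+1).factorial : ℝ) := by
  rw [prod_eq_tsum, Complex.re_tsum (summable_aux θ)]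
  congr 1; funext n
  rw [show ((n+1).factorial : ℂ) = (((n+1).factorial : ℝ) : ℂ) by push_cast; ring]
  rw [Complex.div_ofReal_re]
  congr 1
  rw [← Complex.exp_nat_mul, show (n:ℂ) * ((θ:ℂ) * Complex.I) = ((n*θ : ℝ):ℂ) * Complex.I by
    push_cast; ring]
  exact Complex.exp_ofReal_mul_I_re _

lemma re_eq_formula (θ : ℝ) :
    ((Complex.exp (Complex.exp ((θ : ℂ) * Complex.I)) - 1) *
        Complex.exp (-((θ : ℂ) * Complex.I))).re =
      Real.exp (Real.cos θ) * Real.cos (θ - Real.sin θ) - Real.cos θ := by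
  have h1 : Complex.exp ((θ:ℂ) * Complex.I)
      = (Real.cos θ : ℂ) + (Real.sin θ : ℂ) * Complex.I := by
    rw [Complex.exp_mul_I, Complex.ofReal_cos, Complex.ofReal_sin]
  have h2 : Complex.exp (-((θ:ℂ) * Complex.I))
      = (Real.cos θ : ℂ) - (Real.sin θ : ℂ) * Complex.I := by
    rw [show -((θ:ℂ) * Complex.I) = ((-θ : ℝ) : ℂ) * Complex.I by push_cast; ring,
      Complex.exp_mul_I, ← Complex.ofReal_cos, ← Complex.ofReal_sin,
      Real.cos_neg, Real.sin_neg]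
    push_cast
    ring
  have h3 : Complex.exp ((Real.cos θ : ℂ) + (Real.sin θ : ℂ) * Complex.I)
      = (Real.exp (Real.cos θ) : ℂ) *
        ((Real.cos (Real.sin θ) : ℂ) + (Real.sin (Real.sin θ) : ℂ) * Complex.I) := by
    rw [Complex.exp_add, Complex.exp_mul_I, ← Complex.ofReal_cos, ← Complex.ofReal_sin,
      Complex.ofReal_exp]
  rw [h1, h2, h3]
  simp only [Complex.mul_re, Complex.mul_im, Complex.sub_re, Complex.sub_im, Complex.add_re,
    Complex.add_im, Complex.ofReal_re, Complex.ofReal_im, Complex.I_re, Complex.I_im,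
    Complex.one_re, Complex.one_im]
  rw [Real.cos_sub]
  ring

lemma exp_one_tail : ∑' n : ℕ, (1:ℝ) / ((n+3).factorial : ℝ) = Real.exp 1 - 5/2 := by
  have hs : Summable fun n : ℕ => (1:ℝ)^n / (n.factorial : ℝ) := Real.summable_pow_div_factorial 1
  have hs' : Summable fun n : ℕ => (1:ℝ) / (n.factorial : ℝ) := by simpa using hs
  have he : Real.exp 1 = ∑' n : ℕ, (1:ℝ) / (n.factorial : ℝ) := by
    rw [Real.exp_eq_exp_ℝ, NormedSpace.exp_eq_tsum_div]
    simp
  have h := hs'.sum_add_tsum_nat_add 3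
  rw [← he] at h
  have hfin : ∑ i ∈ Finset.range 3, (1:ℝ) / (i.factorial : ℝ) = 5/2 := by
    simp [Finset.sum_range_succ, Nat.factorial]
    norm_num
  rw [hfin] at h
  linarith

lemma summable_div_fact {f : ℕ → ℝ} (hf : ∀ n, |f n| ≤ 2) :
    Summable fun n : ℕ => f n / ((n+1).factorial : ℝ) := by
  have hs : Summable fun n : ℕ => (2:ℝ) / (n.factorial : ℝ) := by
    simpa [div_eq_mul_inv] using (Real.summable_pow_div_factorial 1).mul_left 2
  apply Summable.of_norm
  apply hs.of_nonneg_of_le (fun n => norm_nonneg _)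
  intro n
  rw [Real.norm_eq_abs, abs_div, _root_.abs_of_nonneg
    (by positivity : (0:ℝ) ≤ ((n+1).factorial : ℝ))]
  apply div_le_div₀ (by norm_num) (hf n)
    (by exact_mod_cast Nat.factorial_pos n)
  exact_mod_cast Nat.factorial_le (Nat.le_succ n)

lemma cos_nat_pi (n : ℕ) : Real.cos (n * π) = (-1 : ℝ)^n := by
  simpa using Real.cos_nat_mul_pi_sub 0 n

set_option maxHeartbeats 1000000 in
lemma key_tsum_ineq (θ : ℝ) :
    ∑' n : ℕ, Real.cos (n * π) / ((n+1).factorial : ℝ)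
      ≤ ∑' n : ℕ, Real.cos (n * θ) / ((n+1).factorial : ℝ) := by
  set c := Real.cos θ with hcdef
  have hc1 : -1 ≤ c := Real.neg_one_le_cos θ
  have hc2 : c ≤ 1 := Real.cos_le_one θ
  have hsθ : Summable fun n : ℕ => Real.cos (n * θ) / ((n+1).factorial : ℝ) :=
    summable_div_fact (fun n => (Real.abs_cos_le_one _).trans (by norm_num))
  have hsπ : Summable fun n : ℕ => Real.cos (n * π) / ((n+1).factorial : ℝ) :=
    summable_div_fact (fun n => (Real.abs_cos_le_one _).trans (by norm_num))
  set D : ℕ → ℝ := fun n => (Real.cos (n*θ) - (-1:ℝ)^n) / ((n+1).factorial : ℝ) with hDdef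
  have hDeq : ∀ n, D n = Real.cos (n * θ) / ((n+1).factorial : ℝ)
      - Real.cos (n * π) / ((n+1).factorial : ℝ) := by
    intro n
    rw [hDdef, cos_nat_pi]
    ring
  have hD : Summable D := by
    apply Summable.congr (hsθ.sub hsπ)
    intro n
    rw [hDeq]
  -- tail bound
  have key : ∀ n : ℕ, -((5*(1+c)/24) * (1/((n+3).factorial : ℝ))) ≤ D (n+5) := by
    intro n
    have hφ : Real.cos ((n+5 : ℕ) * θ) = (-1:ℝ)^(n+5) * Real.cos ((n+5 : ℕ) * (π - θ)) := by
      have h := Real.cos_nat_mul_pi_sub ((n+5 : ℕ) * (π - θ)) (n+5)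
      rw [show ((n+5 : ℕ):ℝ) * π - ((n+5 : ℕ):ℝ) * (π-θ) = ((n+5:ℕ):ℝ) * θ by ring] at h
      exact h
    have h1 : 1 - Real.cos ((n+5 : ℕ) * (π - θ)) ≤ ((n+5 : ℕ) : ℝ)^2 * (1 - Real.cos (π - θ)) :=
      one_sub_cos_nat_mul_le (n+5) (π - θ)
    have hπθ : Real.cos (π - θ) = -c := Real.cos_pi_sub θ
    rw [hπθ] at h1
    have hcos1 : Real.cos ((n+5 : ℕ) * (π - θ)) ≤ 1 := Real.cos_le_one _
    have hnum : -(((n+5 : ℕ):ℝ)^2 * (1+c)) ≤ Real.cos ((n+5 : ℕ)*θ) - (-1:ℝ)^(n+5) := by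
      rw [hφ]
      rcases Nat.even_or_odd (n+5) with he | ho
      · rw [he.neg_one_pow]
        nlinarith
      · rw [ho.neg_one_pow]
        nlinarith [sq_nonneg (((n+5 : ℕ)):ℝ)]
    have hfacpos : (0:ℝ) < ((n+5+1).factorial : ℝ) := by
      exact_mod_cast Nat.factorial_pos _
    have step1 : -(((n+5 : ℕ):ℝ)^2 * (1+c)) / ((n+5+1).factorial : ℝ) ≤ D (n+5) := by
      simp only [hDdef]
      gcongr
    refine le_trans ?_ step1
    have hfac : ((n+5+1).factorial : ℝ)
        = (((n:ℝ)+6) * ((n:ℝ)+5) * ((n:ℝ)+4)) * ((n+3).factorial : ℝ) := by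
      have h : (n+5+1).factorial = (n+6) * ((n+5) * ((n+4) * (n+3).factorial)) := by
        simp [show n+5+1 = (n+3)+3 by ring, Nat.factorial_succ]
      rw [h]
      push_cast
      ring
    have hf3pos : (0:ℝ) < ((n+3).factorial : ℝ) := by exact_mod_cast Nat.factorial_pos _
    have hn : (0:ℝ) ≤ (n:ℝ) := Nat.cast_nonneg n
    have h1c : (0:ℝ) ≤ 1 + c := by linarith
    have hbound : (((n+5 : ℕ):ℝ)^2 * (1+c)) / ((n+5+1).factorial : ℝ)
        ≤ (5*(1+c)/24) * (1/((n+3).factorial : ℝ)) := by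
      rw [hfac, mul_one_div]
      rw [div_le_div_iff₀ (by positivity) hf3pos]
      have hkey : 24 * (((n:ℝ)+5)^2) ≤ 5 * (((n:ℝ)+6) * ((n:ℝ)+5) * ((n:ℝ)+4)) := by
        nlinarith [hn, mul_nonneg hn hn, mul_nonneg (mul_nonneg hn hn) hn]
      have hcast : ((n+5 : ℕ):ℝ) = (n:ℝ) + 5 := by push_cast; ring
      rw [hcast]
      nlinarith [mul_nonneg (mul_nonneg h1c hf3pos.le) (sq_nonneg ((n:ℝ)+5)),
        mul_le_mul_of_nonneg_right (mul_le_mul_of_nonneg_right hkey h1c) hf3pos.le]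
    rw [neg_div]
    linarith
  have hsub : Summable fun n => D (n+5) := (summable_nat_add_iff 5).mpr hD
  have hs1 : Summable fun n : ℕ => (1:ℝ) / (n.factorial : ℝ) := by
    simpa using Real.summable_pow_div_factorial 1
  have hs3 : Summable fun n : ℕ => (1:ℝ) / ((n+3).factorial : ℝ) :=
    (summable_nat_add_iff 3).mpr hs1
  have hlow : Summable fun n : ℕ => -((5*(1+c)/24) * (1/((n+3).factorial : ℝ))) :=
    (hs3.mul_left _).neg
  have tail_ge : -((5*(1+c)/24) * (Real.exp 1 - 5/2)) ≤ ∑' n, D (n+5) := by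
    have heq : ∑' n : ℕ, -((5*(1+c)/24) * (1/((n+3).factorial : ℝ)))
        = -((5*(1+c)/24) * (Real.exp 1 - 5/2)) := by
      rw [tsum_neg, tsum_mul_left, exp_one_tail]
    rw [← heq]
    exact Summable.tsum_le_tsum key hlow hsub
  have split := hD.sum_add_tsum_nat_add 5
  have h2t : Real.cos (2*θ) = 2*c^2 - 1 := Real.cos_two_mul θ
  have h3t : Real.cos (3*θ) = 4*c^3 - 3*c := Real.cos_three_mul θ
  have h4t : Real.cos (4*θ) = 2*(2*c^2-1)^2 - 1 := by
    rw [show (4:ℝ)*θ = 2*(2*θ) by ring, Real.cos_two_mul, h2t]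
  have hfin : ∑ i ∈ Finset.range 5, D i
      = (c+1)/2 + (2*c^2-2)/6 + (4*c^3-3*c+1)/24 + (2*(2*c^2-1)^2-2)/120 := by
    rw [Finset.sum_range_succ, Finset.sum_range_succ, Finset.sum_range_succ,
      Finset.sum_range_succ, Finset.sum_range_succ, Finset.sum_range_zero]
    simp only [hDdef, Nat.cast_zero, Nat.cast_one, Nat.cast_ofNat, zero_mul, one_mul,
      Real.cos_zero, Nat.factorial]
    norm_num
    rw [h2t, h3t, h4t]
    ring
  have hE1 : Real.exp 1 < 2.7182818286 := Real.exp_one_lt_d9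
  have hE2 : 2.7182818283 < Real.exp 1 := Real.exp_one_gt_d9
  have hDsum_nonneg : 0 ≤ ∑' n, D n := by
    rw [← split, hfin]
    have : 0 ≤ (c+1)/2 + (2*c^2-2)/6 + (4*c^3-3*c+1)/24 + (2*(2*c^2-1)^2-2)/120
        - (5*(1+c)/24)*(Real.exp 1 - 5/2) := by
      nlinarith [sq_nonneg (1+c), sq_nonneg (c+1/4),
        mul_nonneg (by linarith : (0:ℝ) ≤ 1+c) (sq_nonneg (c+1/4)),
        mul_nonneg (by linarith : (0:ℝ) ≤ 1+c) (sq_nonneg (1+c)), sq_nonneg c]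
    linarith [tail_ge]
  have hDsum : ∑' n, D n = ∑' n : ℕ, Real.cos (n * θ) / ((n+1).factorial : ℝ)
      - ∑' n : ℕ, Real.cos (n * π) / ((n+1).factorial : ℝ) := by
    rw [← Summable.tsum_sub hsθ hsπ]
    exact tsum_congr hDeq
  linarith [hDsum ▸ hDsum_nonneg]

theorem min_re_exp_sub_one :
    (∀ θ : ℝ,
      ((Complex.exp (Complex.exp ((θ : ℂ) * Complex.I)) - 1) *
        Complex.exp (-((θ : ℂ) * Complex.I))).re =
        Real.exp (Real.cos θ) * Real.cos (θ - Real.sin θ) - Real.cos θ ∧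
      1 - 1 / Real.exp 1 ≤
        Real.exp (Real.cos θ) * Real.cos (θ - Real.sin θ) - Real.cos θ) ∧
    (Real.exp (Real.cos π) * Real.cos (π - Real.sin π) - Real.cos π = 1 - 1 / Real.exp 1) ∧
    IsLeast ((fun θ : ℝ =>
        Real.exp (Real.cos θ) * Real.cos (θ - Real.sin θ) - Real.cos θ) '' Set.Ico 0 (2 * π))
      (1 - 1 / Real.exp 1) := by
  have hπval : Real.exp (Real.cos π) * Real.cos (π - Real.sin π) - Real.cos π
      = 1 - 1 / Real.exp 1 := by
    rw [Real.cos_pi, Real.sin_pi, sub_zero, Real.cos_pi]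
    rw [Real.exp_neg]
    field_simp
    ring
  have hπser : ∑' n : ℕ, Real.cos (n * π) / ((n+1).factorial : ℝ) = 1 - 1 / Real.exp 1 := by
    rw [← re_eq_tsum π, re_eq_formula π, hπval]
  have hineq : ∀ θ : ℝ, 1 - 1 / Real.exp 1 ≤
      Real.exp (Real.cos θ) * Real.cos (θ - Real.sin θ) - Real.cos θ := by
    intro θ
    rw [← re_eq_formula θ, re_eq_tsum θ, ← hπser]
    exact key_tsum_ineq θ
  refine ⟨fun θ => ⟨re_eq_formula θ, hineq θ⟩, hπval, ⟨⟨π, ⟨?_, ?_⟩, hπval⟩, ?_⟩⟩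
  · exact Real.pi_pos.le
  · nlinarith [Real.pi_pos]
  · rintro y ⟨θ, -, rfl⟩
    exact hineq θ
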